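/- arXiv:2510.22273 — 4 statements merged into one kernel-verified Lean document; each statement's English description precedes it below -/
import Mathlib

section
/- Let n ≥ 1, m ≥ 1, s₁,…,s_m > 0, and set λ = ∑_{j=1}^m s_j. For every function g harmonic on ℍ with sup_{(x,t)∈ℍ} |g(x,t)| t^λ < ∞ there exists a function f : ℍ^m → ℝ which is harmonic in each variable separately, satisfies sup_{(z₁,…,z_m)∈ℍ^m} |f(z₁,…,z_m)| t₁^{s₁}⋯t_m^{s_m} < ∞ (where z_j = (x_j,t_j)), and f(z,…,z) = g(z) for all z ∈ ℍ. In other words, A^∞_λ(ℍ) ⊆ Trace(h̃A^∞_{s⃗}). -/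
open MeasureTheory

/-- A real-valued function on `ι → ℝ` is harmonic on an open set `U` if it is `C²` on `U`
and the sum of its unmixed second partial derivatives vanishes identically on `U`. -/
def IsHarmonicOn {ι : Type*} [Fintype ι] [DecidableEq ι]
    (f : (ι → ℝ) → ℝ) (U : Set (ι → ℝ)) : Prop :=
  ContDiffOn ℝ 2 f U ∧
    ∀ x ∈ U, ∑ i, fderiv ℝ (fun y => fderiv ℝ f y (Pi.single i 1)) x (Pi.single i 1) = 0

/-- A function on `ℍ^m` is harmonic in each variable separately: for each index `j` and each
fixed choice of the other variables (all lying in `ℍ`), the map `z_j ↦ f(z₁,…,z_m)` is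
harmonic on `ℍ`. -/
def HarmonicEachVar (n m : ℕ) (f : ((Fin m × Fin (n + 1)) → ℝ) → ℝ) : Prop :=
  ∀ (j : Fin m) (w : (Fin m × Fin (n + 1)) → ℝ),
    (∀ i : Fin m, 0 < w (i, Fin.last n)) →
    IsHarmonicOn (fun y : Fin (n + 1) → ℝ => f (fun q => if q.1 = j then y q.2 else w q))
      {y : Fin (n + 1) → ℝ | 0 < y (Fin.last n)}

/-- Composition of a harmonic function with a homothety `y ↦ a • y + c` is harmonic. -/
lemma isHarmonicOn_comp_affine {ι : Type*} [Fintype ι] [DecidableEq ι]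
    {g : (ι → ℝ) → ℝ} {U : Set (ι → ℝ)} (hU : IsOpen U) (hg : IsHarmonicOn g U)
    (a : ℝ) (c : ι → ℝ) {V : Set (ι → ℝ)}
    (hmaps : ∀ y ∈ V, a • y + c ∈ U) :
    IsHarmonicOn (fun y => g (a • y + c)) V := by
  have hAcd : ContDiff ℝ 2 (fun y : ι → ℝ => a • y + c) :=
    (contDiff_id.const_smul a).add contDiff_const
  have hAd : ∀ y : ι → ℝ, HasFDerivAt (fun y : ι → ℝ => a • y + c)
      ((a • ContinuousLinearMap.id ℝ (ι → ℝ) : (ι → ℝ) →L[ℝ] (ι → ℝ))) y := by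
    intro y
    exact ((a • ContinuousLinearMap.id ℝ (ι → ℝ) :
      (ι → ℝ) →L[ℝ] (ι → ℝ)).hasFDerivAt (x := y)).add_const c
  have hgdiff : ∀ z ∈ U, DifferentiableAt ℝ g z := fun z hz =>
    (hg.1.contDiffAt (hU.mem_nhds hz)).differentiableAt two_ne_zero
  constructor
  · exact hg.1.comp hAcd.contDiffOn hmaps
  · intro y hy
    have hAyU : (a • y + c) ∈ U := hmaps y hy
    have hopen : IsOpen ((fun y : ι → ℝ => a • y + c) ⁻¹' U) :=
      hU.preimage hAcd.continuous
    have hmem : ((fun y : ι → ℝ => a • y + c) ⁻¹' U) ∈ nhds y := hopen.mem_nhds hAyU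
    have key : ∀ e : ι → ℝ,
        fderiv ℝ (fun y' => fderiv ℝ (fun y'' => g (a • y'' + c)) y' e) y e
          = a * (a * fderiv ℝ (fun z => fderiv ℝ g z e) (a • y + c) e) := by
      intro e
      set h : (ι → ℝ) → ℝ := fun z => fderiv ℝ g z e with hh
      have h1 : (fun y' => fderiv ℝ (fun y'' => g (a • y'' + c)) y' e)
          =ᶠ[nhds y] (fun y' => a * h (a • y' + c)) := by
        filter_upwards [hmem] with y' hy'
        have hcomp := fderiv_comp y' (hgdiff _ hy') (hAd y').differentiableAt
        rw [show (fun y'' => g (a • y'' + c)) = g ∘ (fun y'' : ι → ℝ => a • y'' + c) from rfl,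
          hcomp, (hAd y').fderiv]
        simp only [hh, ContinuousLinearMap.comp_apply, ContinuousLinearMap.smul_apply,
          ContinuousLinearMap.id_apply, (fderiv ℝ g _).map_smul, smul_eq_mul]
      rw [h1.fderiv_eq]
      have hcd : ContDiffAt ℝ 1 (fderiv ℝ g) (a • y + c) :=
        (hg.1.contDiffAt (hU.mem_nhds hAyU)).fderiv_right le_rfl
      have hhd : DifferentiableAt ℝ h (a • y + c) :=
        (ContinuousLinearMap.apply ℝ ℝ e).differentiableAt.comp (a • y + c)
          (hcd.differentiableAt one_ne_zero)
      have hdc : DifferentiableAt ℝ (fun y' : ι → ℝ => h (a • y' + c)) y :=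
        by have := hhd.comp y (hAd y).differentiableAt; exact this
      have hcomp2 : fderiv ℝ (fun y' : ι → ℝ => h (a • y' + c)) y
          = (fderiv ℝ h (a • y + c)).comp (a • ContinuousLinearMap.id ℝ (ι → ℝ)) := by
        rw [show (fun y' : ι → ℝ => h (a • y' + c))
            = h ∘ (fun y' : ι → ℝ => a • y' + c) from rfl,
          fderiv_comp y hhd (hAd y).differentiableAt, (hAd y).fderiv]
      rw [fderiv_const_mul hdc a]
      rw [ContinuousLinearMap.smul_apply, hcomp2]
      simp only [ContinuousLinearMap.comp_apply, ContinuousLinearMap.smul_apply,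
        ContinuousLinearMap.id_apply, (fderiv ℝ h (a • y + c)).map_smul, smul_eq_mul]
    calc ∑ i, fderiv ℝ (fun y' =>
            fderiv ℝ (fun y'' => g (a • y'' + c)) y' (Pi.single i 1)) y (Pi.single i 1)
        = ∑ i, a * (a * fderiv ℝ (fun z => fderiv ℝ g z (Pi.single i 1)) (a • y + c)
            (Pi.single i 1)) := Finset.sum_congr rfl fun i _ => key _
      _ = a * (a * ∑ i, fderiv ℝ (fun z => fderiv ℝ g z (Pi.single i 1)) (a • y + c)
            (Pi.single i 1)) := by rw [Finset.mul_sum]; congr 1; rw [Finset.mul_sum]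
      _ = 0 := by rw [hg.2 (a • y + c) hAyU]; ring

/-- for `s_j > 0` and `λ = ∑ s_j`, every `g` harmonic on `ℍ` with
`sup_{(x,t)∈ℍ} |g(x,t)| t^λ < ∞` is the trace of a function `f : ℍ^m → ℝ` harmonic in each
variable separately with `sup_{ℍ^m} |f(z₁,…,z_m)| t₁^{s₁}⋯t_m^{s_m} < ∞`;
that is, `A^∞_λ(ℍ) ⊆ Trace(h̃A^∞_{s⃗})`. -/
theorem harmonic_bloch_extension
    (n m : ℕ) (hn : 1 ≤ n) (hm : 1 ≤ m)
    (s : Fin m → ℝ) (hs : ∀ j, 0 < s j)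
    (g : (Fin (n + 1) → ℝ) → ℝ)
    (hg : IsHarmonicOn g {z : Fin (n + 1) → ℝ | 0 < z (Fin.last n)})
    (hgsup : ∃ C : ℝ, ∀ z : Fin (n + 1) → ℝ, 0 < z (Fin.last n) →
        |g z| * z (Fin.last n) ^ (∑ j : Fin m, s j) ≤ C) :
    ∃ f : ((Fin m × Fin (n + 1)) → ℝ) → ℝ,
      HarmonicEachVar n m f ∧
      (∃ C : ℝ, ∀ z : (Fin m × Fin (n + 1)) → ℝ, (∀ i : Fin m, 0 < z (i, Fin.last n)) →
          |f z| * ∏ j : Fin m, z (j, Fin.last n) ^ s j ≤ C) ∧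
      ∀ z : Fin (n + 1) → ℝ, 0 < z (Fin.last n) → f (fun q => z q.2) = g z := by
  obtain ⟨C, hC⟩ := hgsup
  have hm0 : (0:ℝ) < (m:ℝ) := by exact_mod_cast hm
  set U : Set (Fin (n + 1) → ℝ) := {z : Fin (n + 1) → ℝ | 0 < z (Fin.last n)} with hUdef
  have hU : IsOpen U := isOpen_lt continuous_const (continuous_apply _)
  -- the extension: g evaluated at the average point
  refine ⟨fun z => g (fun k => (∑ i : Fin m, z (i, k)) / m), ?_, ?_, ?_⟩
  · -- harmonic in each variable
    intro j w hw
    set c : Fin (n + 1) → ℝ := fun k => (∑ i ∈ Finset.univ.erase j, w (i, k)) / m with hc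
    have heq : (fun y : Fin (n + 1) → ℝ =>
        g (fun k => (∑ i : Fin m, (if i = j then y k else w (i, k))) / m))
        = fun y : Fin (n + 1) → ℝ => g ((1 / (m:ℝ)) • y + c) := by
      funext y
      congr 1
      funext k
      simp only [hc, Pi.add_apply, Pi.smul_apply, smul_eq_mul]
      rw [← Finset.add_sum_erase _ _ (Finset.mem_univ j),
        Finset.sum_congr rfl (fun i hi => if_neg (Finset.ne_of_mem_erase hi)),
        if_pos rfl, add_div]
      ring
    have hmaps : ∀ y ∈ {y : Fin (n + 1) → ℝ | 0 < y (Fin.last n)},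
        (1 / (m:ℝ)) • y + c ∈ U := by
      intro y hy
      have hck : 0 ≤ c (Fin.last n) :=
        div_nonneg (Finset.sum_nonneg fun i _ => (hw i).le) hm0.le
      have h1 : 0 < (1 / (m:ℝ)) * y (Fin.last n) :=
        mul_pos (by positivity) hy
      refine Set.mem_setOf.2 ?_
      simp only [Pi.add_apply, Pi.smul_apply, smul_eq_mul]
      linarith
    have hres := isHarmonicOn_comp_affine hU hg (1 / (m:ℝ)) c hmaps
    rw [← heq] at hres
    exact hres
  · -- the growth bound
    refine ⟨(m:ℝ) ^ (∑ j : Fin m, s j) * C, ?_⟩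
    intro z hz
    set T : ℝ := ∑ i : Fin m, z (i, Fin.last n) with hT
    haveI : Nonempty (Fin m) := ⟨⟨0, hm⟩⟩
    have hTpos : 0 < T := Finset.sum_pos (fun i _ => hz i) Finset.univ_nonempty
    have havg : 0 < T / m := div_pos hTpos hm0
    set zb : Fin (n + 1) → ℝ := fun k => (∑ i : Fin m, z (i, k)) / m with hzb
    have hzbU : 0 < zb (Fin.last n) := havg
    have hbound := hC zb hzbU
    have hprod : (∏ j : Fin m, z (j, Fin.last n) ^ s j) ≤ T ^ (∑ j : Fin m, s j) := by
      rw [Real.rpow_sum_of_pos hTpos]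
      refine Finset.prod_le_prod (fun j _ => Real.rpow_nonneg (hz j).le _) ?_
      intro j _
      exact Real.rpow_le_rpow (hz j).le
        (Finset.single_le_sum (fun i _ => (hz i).le) (Finset.mem_univ j)) (hs j).le
    have hTsplit : T ^ (∑ j : Fin m, s j)
        = (m:ℝ) ^ (∑ j : Fin m, s j) * (T / m) ^ (∑ j : Fin m, s j) := by
      rw [← Real.mul_rpow hm0.le havg.le, mul_div_cancel₀ _ hm0.ne']
    calc |g zb| * ∏ j : Fin m, z (j, Fin.last n) ^ s j
        ≤ |g zb| * T ^ (∑ j : Fin m, s j) :=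
          mul_le_mul_of_nonneg_left hprod (abs_nonneg _)
      _ = (m:ℝ) ^ (∑ j : Fin m, s j) * (|g zb| * (T / m) ^ (∑ j : Fin m, s j)) := by
          rw [hTsplit]; ring
      _ ≤ (m:ℝ) ^ (∑ j : Fin m, s j) * C := by
          have : zb (Fin.last n) = T / m := rfl
          exact mul_le_mul_of_nonneg_left (by rw [← this]; exact hbound)
            (Real.rpow_nonneg hm0.le _)
  · -- the trace identity
    intro z hz
    show g (fun k => (∑ _i : Fin m, z k) / (m:ℝ)) = g z
    congr 1
    funext k
    rw [Finset.sum_const, Finset.card_univ, Fintype.card_fin, nsmul_eq_mul,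
      mul_div_cancel_left₀ _ hm0.ne']
end

section
/- Let m ≥ 1, ν₁,…,ν_m > 0, and set s = ∑_{j=1}^m ν_j. Then the set of functions g : ℂ₊ → ℂ for which there exists a holomorphic function f on ℂ₊^m with sup_{(z₁,…,z_m)∈ℂ₊^m} |f(z₁,…,z_m)| ∏_{j=1}^m (Im z_j)^{ν_j} < ∞ and f(z,…,z) = g(z) for all z ∈ ℂ₊, is exactly the set of holomorphic functions g on ℂ₊ with sup_{z∈ℂ₊} |g(z)| (Im z)^s < ∞. In other words, Trace(A^∞_{ν⃗}(ℂ₊^m)) = A^∞_s(ℂ₊). -/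
/-- for `ν_j > 0` and `s = ∑ ν_j`, the trace set of the weighted Bloch-type
space `A^∞_{ν⃗}(ℂ₊^m)` (holomorphic `f` on `ℂ₊^m` with
`sup |f(z₁,…,z_m)| ∏ (Im z_j)^{ν_j} < ∞`) is exactly `A^∞_s(ℂ₊)`:
`Trace(A^∞_{ν⃗}(ℂ₊^m)) = A^∞_s(ℂ₊)`. -/
theorem trace_bloch_upperHalfPlane
    (m : ℕ) (hm : 1 ≤ m) (ν : Fin m → ℝ) (hν : ∀ j, 0 < ν j) :
    {g : ℂ → ℂ | ∃ f : (Fin m → ℂ) → ℂ,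
        DifferentiableOn ℂ f {z : Fin m → ℂ | ∀ j, 0 < (z j).im} ∧
        (∃ C : ℝ, ∀ z : Fin m → ℂ, (∀ j, 0 < (z j).im) →
          ‖f z‖ * ∏ j : Fin m, (z j).im ^ ν j ≤ C) ∧
        ∀ z : ℂ, 0 < z.im → f (fun _ => z) = g z} =
    {g : ℂ → ℂ | DifferentiableOn ℂ g {z : ℂ | 0 < z.im} ∧
        ∃ C : ℝ, ∀ z : ℂ, 0 < z.im →
          ‖g z‖ * z.im ^ (∑ j : Fin m, ν j) ≤ C} := by
  have hm0 : (0:ℝ) < m := by exact_mod_cast hm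
  ext g
  constructor
  · rintro ⟨f, hf, ⟨C, hC⟩, hdiag⟩
    constructor
    · have : DifferentiableOn ℂ (fun z : ℂ => f (fun _ => z)) {z : ℂ | 0 < z.im} := by
        apply hf.comp
        · exact (differentiable_pi.mpr fun j => differentiable_id).differentiableOn
        · intro z hz j; exact hz
      exact this.congr fun z hz => (hdiag z hz).symm
    · refine ⟨C, fun z hz => ?_⟩
      have := hC (fun _ => z) (fun _ => hz)
      rw [hdiag z hz] at this
      rwa [Real.rpow_sum_of_pos hz ν Finset.univ]
  · rintro ⟨hg, C, hC⟩
    have hmne : (Finset.univ : Finset (Fin m)).Nonempty := by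
      simpa [Finset.univ_nonempty_iff] using Fin.pos_iff_nonempty.mp hm
    refine ⟨fun z => g ((∑ j, z j) / m), ?_, ?_, ?_⟩
    · apply hg.comp
      · have h1 : Differentiable ℂ (fun z : Fin m → ℂ => ∑ j : Fin m, z j) :=
          Differentiable.fun_sum fun j _ => differentiable_pi.mp differentiable_id j
        have : Differentiable ℂ (fun z : Fin m → ℂ => (∑ j : Fin m, z j) / (m:ℂ)) := by
          simp only [div_eq_mul_inv]
          exact h1.mul_const _
        exact this.differentiableOn
      · intro z hz
        have : (0:ℝ) < (∑ j, z j).im := by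
          rw [Complex.im_sum]
          exact Finset.sum_pos (fun j _ => hz j) hmne
        simp only [Set.mem_setOf_eq, Complex.div_natCast_im]
        positivity
    · refine ⟨(m:ℝ) ^ (∑ j : Fin m, ν j) * max C 0, fun z hz => ?_⟩
      set w : ℂ := (∑ j, z j) / m with hw
      have hwim : w.im = (∑ j, (z j).im) / m := by
        rw [hw, Complex.div_natCast_im, Complex.im_sum]
      have hwpos : 0 < w.im := by
        rw [hwim]
        exact div_pos (Finset.sum_pos (fun j _ => hz j) hmne) hm0
      have key : ∏ j : Fin m, (z j).im ^ ν j ≤ ((m:ℝ) * w.im) ^ (∑ j : Fin m, ν j) := by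
        rw [Real.rpow_sum_of_pos (by positivity) ν Finset.univ]
        apply Finset.prod_le_prod (fun j _ => (Real.rpow_nonneg (hz j).le _))
        intro j _
        apply Real.rpow_le_rpow (hz j).le _ (hν j).le
        rw [hwim, mul_div_cancel₀ _ hm0.ne']
        exact Finset.single_le_sum (fun k _ => (hz k).le) (Finset.mem_univ j)
      calc ‖g w‖ * ∏ j : Fin m, (z j).im ^ ν j
          ≤ ‖g w‖ * ((m:ℝ) * w.im) ^ (∑ j : Fin m, ν j) := by
            apply mul_le_mul_of_nonneg_left key (norm_nonneg _)
        _ = (m:ℝ) ^ (∑ j : Fin m, ν j) * (‖g w‖ * w.im ^ (∑ j : Fin m, ν j)) := by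
            rw [Real.mul_rpow hm0.le hwpos.le]; ring
        _ ≤ (m:ℝ) ^ (∑ j : Fin m, ν j) * max C 0 := by
            apply mul_le_mul_of_nonneg_left _ (Real.rpow_nonneg hm0.le _)
            exact le_max_of_le_left (hC w hwpos)
    · intro z hz
      show g ((∑ _j : Fin m, z) / m) = g z
      congr 1
      rw [Finset.sum_const, Finset.card_univ, Fintype.card_fin, nsmul_eq_mul,
        mul_div_cancel_left₀ _ (by exact_mod_cast hm0.ne' : (m:ℂ) ≠ 0)]
end

section
/- Let n ≥ 1, m ≥ 1, r₁,…,r_m > 0 and r = ∑_{j=1}^m r_j. Then Trace(Λ(r₁,…,r_m)) = Λ(r): the set of functions g : B → ℂ for which there exists f ∈ H(B^m) with sup_{(z₁,…,z_m)∈B^m} |f(z₁,…,z_m)| ∏_{j=1}^m (1−|z_j|²)^{r_j} < ∞ and f(z,…,z) = g(z) for all z ∈ B, is exactly the set of g ∈ H(B) with sup_{z∈B} |g(z)| (1−|z|²)^r < ∞. -/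
set_option maxHeartbeats 1000000 in
/-- for `r_j > 0` and `r = ∑ r_j`, `Trace(Λ(r₁,…,r_m)) = Λ(r)`: the set of
traces `g(z) = f(z,…,z)` of holomorphic `f` on `B^m` with
`sup |f(z₁,…,z_m)| ∏ (1−|z_j|²)^{r_j} < ∞` equals the set of holomorphic `g` on `B`
with `sup |g(z)| (1−|z|²)^r < ∞`. -/
theorem trace_bloch_ball
    (n m : ℕ) (hn : 1 ≤ n) (hm : 1 ≤ m) (r : Fin m → ℝ) (hr : ∀ j, 0 < r j) :
    {g : EuclideanSpace ℂ (Fin n) → ℂ | ∃ f : (Fin m → EuclideanSpace ℂ (Fin n)) → ℂ,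
        DifferentiableOn ℂ f
          {z : Fin m → EuclideanSpace ℂ (Fin n) |
            ∀ j, z j ∈ Metric.ball (0 : EuclideanSpace ℂ (Fin n)) 1} ∧
        (∃ C : ℝ, ∀ z : Fin m → EuclideanSpace ℂ (Fin n),
          (∀ j, z j ∈ Metric.ball (0 : EuclideanSpace ℂ (Fin n)) 1) →
          ‖f z‖ * ∏ j : Fin m, (1 - ‖z j‖ ^ 2) ^ r j ≤ C) ∧
        ∀ z ∈ Metric.ball (0 : EuclideanSpace ℂ (Fin n)) 1, f (fun _ => z) = g z} =
    {g : EuclideanSpace ℂ (Fin n) → ℂ |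
        DifferentiableOn ℂ g (Metric.ball (0 : EuclideanSpace ℂ (Fin n)) 1) ∧
        ∃ C : ℝ, ∀ z ∈ Metric.ball (0 : EuclideanSpace ℂ (Fin n)) 1,
          ‖g z‖ * (1 - ‖z‖ ^ 2) ^ (∑ j : Fin m, r j) ≤ C} := by
  set E := EuclideanSpace ℂ (Fin n)
  have hm0 : (0:ℝ) < m := by exact_mod_cast hm
  set R : ℝ := ∑ j : Fin m, r j with hR
  have hR0 : 0 < R := Finset.sum_pos (fun j _ => hr j) ⟨⟨0, hm⟩, Finset.mem_univ _⟩
  ext g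
  simp only [Set.mem_setOf_eq]
  constructor
  · rintro ⟨f, hf, ⟨C, hC⟩, hdiag⟩
    -- the diagonal embedding
    set D : E →L[ℂ] (Fin m → E) := ContinuousLinearMap.pi (fun _ => ContinuousLinearMap.id ℂ E)
    have hD : ∀ z : E, D z = fun _ => z := fun z => rfl
    have hmaps : ∀ z ∈ Metric.ball (0:E) 1,
        D z ∈ {w : Fin m → E | ∀ j, w j ∈ Metric.ball (0:E) 1} := by
      intro z hz j; exact hz
    constructor
    · have : DifferentiableOn ℂ (f ∘ D) (Metric.ball (0:E) 1) :=
        hf.comp (D.differentiable.differentiableOn) hmaps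
      exact this.congr (fun z hz => (hdiag z hz).symm)
    · refine ⟨C, fun z hz => ?_⟩
      have hz1 : ‖z‖ < 1 := by simpa [mem_ball_zero_iff] using hz
      have ht : (0:ℝ) < 1 - ‖z‖ ^ 2 := by nlinarith [norm_nonneg z]
      have := hC (fun _ => z) (fun j => hz)
      rw [hdiag z hz] at this
      calc ‖g z‖ * (1 - ‖z‖ ^ 2) ^ R
          = ‖g z‖ * ∏ j : Fin m, (1 - ‖z‖ ^ 2) ^ r j := by
            rw [hR, Real.rpow_sum_of_pos ht]
        _ ≤ C := this
  · rintro ⟨hg, C, hC⟩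
    -- averaging map
    set L : (Fin m → E) →L[ℂ] E :=
      (m:ℂ)⁻¹ • (∑ j : Fin m, ContinuousLinearMap.proj j) with hLdef
    have hL : ∀ z : Fin m → E, L z = (m:ℂ)⁻¹ • ∑ j : Fin m, z j := by
      intro z; simp [hLdef]
    have hmC : (m:ℂ) ≠ 0 := by exact_mod_cast (Nat.pos_of_ne_zero (by omega)).ne'
    have hLnorm : ∀ z : Fin m → E, ‖L z‖ = (m:ℝ)⁻¹ * ‖∑ j : Fin m, z j‖ := by
      intro z
      rw [hL, norm_smul]
      congr 1
      simp [norm_inv]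
    have hmaps : ∀ z ∈ {w : Fin m → E | ∀ j, w j ∈ Metric.ball (0:E) 1},
        L z ∈ Metric.ball (0:E) 1 := by
      intro z hz
      rw [mem_ball_zero_iff, hLnorm]
      have h1 : ‖∑ j : Fin m, z j‖ ≤ ∑ j : Fin m, ‖z j‖ := norm_sum_le _ _
      have h2 : ∑ j : Fin m, ‖z j‖ < ∑ _j : Fin m, (1:ℝ) := by
        refine Finset.sum_lt_sum_of_nonempty ⟨⟨0, hm⟩, Finset.mem_univ _⟩ ?_
        intro j _; simpa [mem_ball_zero_iff] using hz j
      have h3 : ∑ _j : Fin m, (1:ℝ) = m := by simp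
      calc (m:ℝ)⁻¹ * ‖∑ j : Fin m, z j‖ < (m:ℝ)⁻¹ * m := by
            apply (mul_lt_mul_iff_right₀ (by positivity)).2
            linarith
        _ = 1 := by field_simp
    refine ⟨g ∘ L, hg.comp (L.differentiable.differentiableOn) hmaps, ⟨(m:ℝ) ^ R * C, ?_⟩, ?_⟩
    · intro z hz
      have hball := hmaps z hz
      have hLz : ‖L z‖ < 1 := mem_ball_zero_iff.mp hball
      -- key inequality : ∏ (1-‖z j‖²)^{r j} ≤ m^R (1-‖L z‖²)^R
      have ht : ∀ j, 0 < 1 - ‖z j‖ ^ 2 := by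
        intro j
        have := (mem_ball_zero_iff).1 (hz j)
        nlinarith [norm_nonneg (z j)]
      -- step 1 : ‖L z‖² ≤ m⁻¹ ∑ ‖z j‖²
      have hsq : ‖L z‖ ^ 2 ≤ (m:ℝ)⁻¹ * ∑ j : Fin m, ‖z j‖ ^ 2 := by
        have h1 : ‖L z‖ ≤ (m:ℝ)⁻¹ * ∑ j : Fin m, ‖z j‖ := by
          rw [hLnorm]
          exact mul_le_mul_of_nonneg_left (norm_sum_le _ _) (by positivity)
        have h2 : (∑ j : Fin m, ‖z j‖) ^ 2 ≤ (m:ℝ) * ∑ j : Fin m, ‖z j‖ ^ 2 := by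
          have := sq_sum_le_card_mul_sum_sq (s := Finset.univ) (f := fun j : Fin m => ‖z j‖)
          simpa using this
        have h3 : ‖L z‖ ^ 2 ≤ ((m:ℝ)⁻¹ * ∑ j : Fin m, ‖z j‖) ^ 2 :=
          pow_le_pow_left₀ (norm_nonneg _) h1 2
        calc ‖L z‖ ^ 2 ≤ ((m:ℝ)⁻¹ * ∑ j : Fin m, ‖z j‖) ^ 2 := h3
          _ = (m:ℝ)⁻¹ ^ 2 * (∑ j : Fin m, ‖z j‖) ^ 2 := by ring
          _ ≤ (m:ℝ)⁻¹ ^ 2 * ((m:ℝ) * ∑ j : Fin m, ‖z j‖ ^ 2) :=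
              mul_le_mul_of_nonneg_left h2 (by positivity)
          _ = (m:ℝ)⁻¹ * ∑ j : Fin m, ‖z j‖ ^ 2 := by
              field_simp
      -- step 2 : m⁻¹ ∑ (1-‖z j‖²) ≤ 1 - ‖L z‖²
      have hstep2 : (m:ℝ)⁻¹ * ∑ j : Fin m, (1 - ‖z j‖ ^ 2) ≤ 1 - ‖L z‖ ^ 2 := by
        have : ∑ j : Fin m, (1 - ‖z j‖ ^ 2) = (m:ℝ) - ∑ j : Fin m, ‖z j‖ ^ 2 := by
          rw [Finset.sum_sub_distrib]; simp
        rw [this, mul_sub, inv_mul_cancel₀ hm0.ne']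
        linarith
      -- step 3 : AM-GM
      have hamgm : ∏ j : Fin m, (1 - ‖z j‖ ^ 2) ^ (r j / R)
          ≤ ∑ j : Fin m, (1 - ‖z j‖ ^ 2) := by
        calc ∏ j : Fin m, (1 - ‖z j‖ ^ 2) ^ (r j / R)
            ≤ ∑ j : Fin m, (r j / R) * (1 - ‖z j‖ ^ 2) :=
              Real.geom_mean_le_arith_mean_weighted Finset.univ _ _
                (fun j _ => div_nonneg (hr j).le hR0.le)
                (by rw [← Finset.sum_div]; field_simp; exact hR.symm)
                (fun j _ => (ht j).le)
          _ ≤ ∑ j : Fin m, (1 - ‖z j‖ ^ 2) := by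
              refine Finset.sum_le_sum fun j _ => ?_
              have hw1 : r j / R ≤ 1 := by
                rw [div_le_one hR0]
                exact Finset.single_le_sum (fun i _ => (hr i).le) (Finset.mem_univ j)
              nlinarith [(ht j).le]
      -- combine
      have hkey : ∏ j : Fin m, (1 - ‖z j‖ ^ 2) ^ r j
          ≤ (m:ℝ) ^ R * (1 - ‖L z‖ ^ 2) ^ R := by
        have e1 : ∏ j : Fin m, (1 - ‖z j‖ ^ 2) ^ r j
            = (∏ j : Fin m, (1 - ‖z j‖ ^ 2) ^ (r j / R)) ^ R := by
          rw [← Real.finset_prod_rpow _ _ (fun j _ => Real.rpow_nonneg (ht j).le _) R]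
          refine Finset.prod_congr rfl fun j _ => ?_
          rw [← Real.rpow_mul (ht j).le, div_mul_cancel₀ _ hR0.ne']
        have e2 : ∑ j : Fin m, (1 - ‖z j‖ ^ 2) ≤ (m:ℝ) * (1 - ‖L z‖ ^ 2) := by
          have := mul_le_mul_of_nonneg_left hstep2 hm0.le
          rw [← mul_assoc, mul_inv_cancel₀ hm0.ne', one_mul] at this
          exact this
        rw [e1, ← Real.mul_rpow hm0.le (by nlinarith [norm_nonneg (L z)])]
        refine Real.rpow_le_rpow (Finset.prod_nonneg fun j _ => Real.rpow_nonneg (ht j).le _)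
          (hamgm.trans e2) hR0.le
      calc ‖(g ∘ L) z‖ * ∏ j : Fin m, (1 - ‖z j‖ ^ 2) ^ r j
          ≤ ‖g (L z)‖ * ((m:ℝ) ^ R * (1 - ‖L z‖ ^ 2) ^ R) :=
            mul_le_mul_of_nonneg_left hkey (norm_nonneg _)
        _ = (m:ℝ) ^ R * (‖g (L z)‖ * (1 - ‖L z‖ ^ 2) ^ R) := by ring
        _ ≤ (m:ℝ) ^ R * C :=
            mul_le_mul_of_nonneg_left (hC (L z) hball) (Real.rpow_nonneg hm0.le _)
    · intro z hz
      have : L (fun _ => z) = z := by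
        rw [hL]
        rw [Finset.sum_const, Finset.card_univ, Fintype.card_fin]
        rw [← Nat.cast_smul_eq_nsmul ℂ, smul_smul, inv_mul_cancel₀ hmC, one_smul]
      simp [Function.comp, this]
end

section
/- Let n ≥ 1, m ≥ 1, r₁,…,r_m > 0 with ∑_{j=1}^m 1/r_j = 1. Then Trace(Λ_log(r₁,…,r_m)) equals the space of g ∈ H(B) with sup_{z∈B} |g(z)| (1−|z|) (log(2/(1−|z|)))^{−1} < ∞: (i) for every f ∈ Λ_log(r₁,…,r_m), the function g(z) = f(z,…,z) satisfies sup_{z∈B} |g(z)| (1−|z|) (log(2/(1−|z|)))^{−1} < ∞; and (ii) every holomorphic g on B with sup_{z∈B} |g(z)| (1−|z|) (log(2/(1−|z|)))^{−1} < ∞ equals f(z,…,z) for some f ∈ Λ_log(r₁,…,r_m). -/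
open Finset

private lemma prod_diag_eq {m : ℕ} (r : Fin m → ℝ)
    (hsum : ∑ j : Fin m, 1 / r j = 1) {x y : ℝ} (hx : 0 < x) (hy : 0 < y) :
    ∏ j : Fin m, x ^ (1 / r j) * y ^ (-(1 / r j)) = x * y⁻¹ := by
  rw [Finset.prod_mul_distrib, ← Real.rpow_sum_of_pos hx, ← Real.rpow_sum_of_pos hy,
    Finset.sum_neg_distrib, hsum, Real.rpow_one, Real.rpow_neg_one]

private lemma log_ge_log_two {s : ℝ} (h0 : 0 < s) (h1 : s ≤ 1) :
    Real.log 2 ≤ Real.log (2 / s) := by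
  apply Real.log_le_log (by norm_num)
  rw [le_div_iff₀ h0]; nlinarith



set_option maxHeartbeats 1000000 in
/-- for `r_j > 0` with `∑ 1/r_j = 1`, `Trace(Λ_log(r₁,…,r_m))` equals the
space of holomorphic `g` on `B` with `sup |g(z)| (1−|z|) (log(2/(1−|z|)))⁻¹ < ∞`:
(i) the trace of any `f ∈ Λ_log(r₁,…,r_m)` satisfies this bound, and (ii) every such `g`
is the trace of some `f ∈ Λ_log(r₁,…,r_m)`. -/
theorem trace_logBloch_ball
    (n m : ℕ) (hn : 1 ≤ n) (hm : 1 ≤ m)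
    (r : Fin m → ℝ) (hr : ∀ j, 0 < r j) (hsum : ∑ j : Fin m, 1 / r j = 1) :
    (∀ f : (Fin m → EuclideanSpace ℂ (Fin n)) → ℂ,
      DifferentiableOn ℂ f
        {z : Fin m → EuclideanSpace ℂ (Fin n) |
          ∀ j, z j ∈ Metric.ball (0 : EuclideanSpace ℂ (Fin n)) 1} →
      (∃ C : ℝ, ∀ z : Fin m → EuclideanSpace ℂ (Fin n),
        (∀ j, z j ∈ Metric.ball (0 : EuclideanSpace ℂ (Fin n)) 1) →
        ‖f z‖ * ∏ j : Fin m,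
          (1 - ‖z j‖) ^ (1 / r j) * (Real.log (2 / (1 - ‖z j‖))) ^ (-(1 / r j)) ≤ C) →
      ∃ C : ℝ, ∀ z ∈ Metric.ball (0 : EuclideanSpace ℂ (Fin n)) 1,
        ‖f (fun _ => z)‖ * (1 - ‖z‖) * (Real.log (2 / (1 - ‖z‖)))⁻¹ ≤ C) ∧
    (∀ g : EuclideanSpace ℂ (Fin n) → ℂ,
      DifferentiableOn ℂ g (Metric.ball (0 : EuclideanSpace ℂ (Fin n)) 1) →
      (∃ C : ℝ, ∀ z ∈ Metric.ball (0 : EuclideanSpace ℂ (Fin n)) 1,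
        ‖g z‖ * (1 - ‖z‖) * (Real.log (2 / (1 - ‖z‖)))⁻¹ ≤ C) →
      ∃ f : (Fin m → EuclideanSpace ℂ (Fin n)) → ℂ,
        DifferentiableOn ℂ f
          {z : Fin m → EuclideanSpace ℂ (Fin n) |
            ∀ j, z j ∈ Metric.ball (0 : EuclideanSpace ℂ (Fin n)) 1} ∧
        (∃ C : ℝ, ∀ z : Fin m → EuclideanSpace ℂ (Fin n),
          (∀ j, z j ∈ Metric.ball (0 : EuclideanSpace ℂ (Fin n)) 1) →
          ‖f z‖ * ∏ j : Fin m,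
            (1 - ‖z j‖) ^ (1 / r j) * (Real.log (2 / (1 - ‖z j‖))) ^ (-(1 / r j)) ≤ C) ∧
        ∀ z ∈ Metric.ball (0 : EuclideanSpace ℂ (Fin n)) 1, f (fun _ => z) = g z) := by
  have hm0 : (0:ℝ) < m := by exact_mod_cast hm
  have hlog2 : (0:ℝ) < Real.log 2 := Real.log_pos (by norm_num)
  constructor
  · -- part (i)
    rintro f _ ⟨C, hC⟩
    refine ⟨C, fun z hz => ?_⟩
    rw [Metric.mem_ball, dist_zero_right] at hz
    have hx : 0 < 1 - ‖z‖ := by linarith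
    have hy : 0 < Real.log (2 / (1 - ‖z‖)) :=
      lt_of_lt_of_le hlog2 (log_ge_log_two hx (by have := norm_nonneg z; linarith))
    have := hC (fun _ => z) (fun j => by simpa [Metric.mem_ball, dist_zero_right] using hz)
    rwa [prod_diag_eq r hsum hx hy, ← mul_assoc] at this
  · -- part (ii)
    rintro g hg ⟨C₀, hC₀⟩
    have hmC : ((m:ℂ)) ≠ 0 := by exact_mod_cast (by positivity : (0:ℝ) < m).ne'
    set A : (Fin m → EuclideanSpace ℂ (Fin n)) → EuclideanSpace ℂ (Fin n) := fun z => (m:ℂ)⁻¹ • ∑ j : Fin m, z j with hA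
    have hAnorm : ∀ z : Fin m → EuclideanSpace ℂ (Fin n), ‖A z‖ = (m:ℝ)⁻¹ * ‖∑ j : Fin m, z j‖ := by
      intro z
      rw [hA, norm_smul, norm_inv]
      norm_num
    have hkey : ∀ z : Fin m → EuclideanSpace ℂ (Fin n), (∀ j, ‖z j‖ < 1) →
        (m:ℝ)⁻¹ * ∑ j : Fin m, (1 - ‖z j‖) ≤ 1 - ‖A z‖ := by
      intro z hz
      have h1 : ‖A z‖ ≤ (m:ℝ)⁻¹ * ∑ j : Fin m, ‖z j‖ := by
        rw [hAnorm]
        exact mul_le_mul_of_nonneg_left (norm_sum_le _ _) (by positivity)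
      have h2 : ∑ j : Fin m, (1 - ‖z j‖) = m - ∑ j : Fin m, ‖z j‖ := by
        rw [Finset.sum_sub_distrib, Finset.sum_const, card_univ, Fintype.card_fin]
        norm_num
      have : (m:ℝ)⁻¹ * (m - ∑ j : Fin m, ‖z j‖) = 1 - (m:ℝ)⁻¹ * ∑ j : Fin m, ‖z j‖ := by
        field_simp
      rw [h2, this]; linarith
    have hsum_pos : ∀ z : Fin m → EuclideanSpace ℂ (Fin n), (∀ j, ‖z j‖ < 1) →
        0 < ∑ j : Fin m, (1 - ‖z j‖) := by
      intro z hz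
      refine Finset.sum_pos (fun j _ => by have := hz j; linarith) ?_
      exact Finset.univ_nonempty_iff.mpr ⟨⟨0, hm⟩⟩
    have hmem : ∀ z : Fin m → EuclideanSpace ℂ (Fin n), (∀ j, ‖z j‖ < 1) → ‖A z‖ < 1 := by
      intro z hz
      have := hkey z hz
      have h2 := hsum_pos z hz
      nlinarith [inv_pos.mpr hm0]
    refine ⟨fun z => g (A z), ?_, ?_, ?_⟩
    · -- differentiability
      have hAdiff : Differentiable ℂ A := by
        apply Differentiable.fun_const_smul
        exact Differentiable.fun_sum fun j _ => differentiable_pi.mp differentiable_id j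
      refine DifferentiableOn.comp hg hAdiff.differentiableOn ?_
      intro z hz
      simp only [Set.mem_setOf_eq, Metric.mem_ball, dist_zero_right] at hz ⊢
      exact hmem z hz
    · -- the bound
      set K : ℝ := 1 + Real.log m / Real.log 2 with hK
      have hK1 : (1:ℝ) ≤ K := by
        have h0 : 0 ≤ Real.log m := Real.log_nonneg (by exact_mod_cast hm)
        have h1 : 0 ≤ Real.log m / Real.log 2 := by positivity
        rw [hK]; linarith
      refine ⟨C₀ * m * K, fun z hz => ?_⟩
      simp only [Metric.mem_ball, dist_zero_right] at hz
      set w := A z with hw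
      have hwball : ‖w‖ < 1 := hmem z hz
      have hs : 0 < 1 - ‖w‖ := by linarith
      have hs1 : 1 - ‖w‖ ≤ 1 := by have := norm_nonneg w; linarith
      set L : ℝ := Real.log (2 / (1 - ‖w‖)) with hL
      have hLpos : 0 < L := lt_of_lt_of_le hlog2 (log_ge_log_two hs hs1)
      set a : Fin m → ℝ := fun j => 1 / r j with ha
      have hapos : ∀ j, 0 < a j := fun j => by have := hr j; positivity
      have ha1 : ∀ j, a j ≤ 1 := by
        intro j
        rw [← hsum]
        exact Finset.single_le_sum (fun i _ => (hapos i).le) (Finset.mem_univ j)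
      set sj : Fin m → ℝ := fun j => 1 - ‖z j‖ with hsj
      have hsjpos : ∀ j, 0 < sj j := fun j => by
        have := hz j; show (0:ℝ) < 1 - ‖z j‖; linarith
      have hsj1 : ∀ j, sj j ≤ 1 := fun j => by
        have := norm_nonneg (z j); show 1 - ‖z j‖ ≤ (1:ℝ); linarith
      set Lj : Fin m → ℝ := fun j => Real.log (2 / sj j) with hLj
      have hLjlog2 : ∀ j, Real.log 2 ≤ Lj j := fun j => log_ge_log_two (hsjpos j) (hsj1 j)
      have hLjpos : ∀ j, 0 < Lj j := fun j => lt_of_lt_of_le hlog2 (hLjlog2 j)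
      -- (1) product of sj^{a j} ≤ m * (1 - ‖w‖)
      have h1 : ∏ j, sj j ^ a j ≤ m * (1 - ‖w‖) := by
        have hgm := Real.geom_mean_le_arith_mean_weighted Finset.univ a sj
          (fun i _ => (hapos i).le) hsum (fun i _ => (hsjpos i).le)
        have h2 : ∑ j, a j * sj j ≤ ∑ j, sj j :=
          Finset.sum_le_sum fun j _ =>
            mul_le_of_le_one_left (hsjpos j).le (ha1 j)
        have h3 := hkey z hz
        calc ∏ j, sj j ^ a j ≤ ∑ j, a j * sj j := hgm
          _ ≤ ∑ j, sj j := h2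
          _ ≤ m * (1 - ‖w‖) := by
              rw [← mul_le_mul_iff_right₀ (inv_pos.mpr hm0)]
              calc (m:ℝ)⁻¹ * ∑ j, sj j ≤ 1 - ‖w‖ := h3
                _ = (m:ℝ)⁻¹ * (m * (1 - ‖w‖)) := by field_simp
      -- (2) L ≤ K * Lj j for each j
      have h2 : ∀ j, L ≤ K * Lj j := by
        intro j
        have hsw : sj j / m ≤ 1 - ‖w‖ := by
          have h3 := hkey z hz
          have h4 : sj j ≤ ∑ i, sj i :=
            Finset.single_le_sum (fun i _ => (hsjpos i).le) (Finset.mem_univ j)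
          calc sj j / m = (m:ℝ)⁻¹ * sj j := by ring
            _ ≤ (m:ℝ)⁻¹ * ∑ i, sj i :=
                mul_le_mul_of_nonneg_left h4 (by positivity)
            _ ≤ 1 - ‖w‖ := h3
        have hsw' : sj j ≤ (1 - ‖w‖) * m := (div_le_iff₀ hm0).mp hsw
        have hdiv : 2 / (1 - ‖w‖) ≤ 2 * m / sj j := by
          rw [div_le_div_iff₀ hs (hsjpos j)]
          linarith
        have hlogle : L ≤ Real.log (2 * m / sj j) :=
          Real.log_le_log (by positivity) hdiv
        have heq : Real.log (2 * m / sj j) = Lj j + Real.log m := by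
          rw [hLj]
          rw [show (2:ℝ) * m / sj j = 2 / sj j * m by ring]
          rw [Real.log_mul (div_pos two_pos (hsjpos j)).ne' hm0.ne']
        have hlogm : Real.log m ≤ Real.log m / Real.log 2 * Lj j := by
          have h5 : Real.log m / Real.log 2 * Real.log 2 ≤ Real.log m / Real.log 2 * Lj j :=
            mul_le_mul_of_nonneg_left (hLjlog2 j)
              (by have : 0 ≤ Real.log m := Real.log_nonneg (by exact_mod_cast hm); positivity)
          calc Real.log m = Real.log m / Real.log 2 * Real.log 2 := by field_simp
            _ ≤ _ := h5
        calc L ≤ Lj j + Real.log m := heq ▸ hlogle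
          _ ≤ Lj j + Real.log m / Real.log 2 * Lj j := by linarith
          _ = K * Lj j := by rw [hK]; ring
      -- (3) L ≤ K * ∏ Lj^{a j}
      set Q : ℝ := ∏ j, Lj j ^ a j with hQ
      have hQpos : 0 < Q := Finset.prod_pos fun j _ => Real.rpow_pos_of_pos (hLjpos j) _
      have h3 : L ≤ K * Q := by
        have e1 : L = ∏ j, L ^ a j := by
          rw [← Real.rpow_sum_of_pos hLpos, hsum, Real.rpow_one]
        have e2 : ∏ j, L ^ a j ≤ ∏ j, (K * Lj j) ^ a j :=
          Finset.prod_le_prod (fun j _ => Real.rpow_nonneg hLpos.le _)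
            (fun j _ => Real.rpow_le_rpow hLpos.le (h2 j) (hapos j).le)
        have e3 : ∏ j, (K * Lj j) ^ a j = K * Q := by
          rw [hQ]
          have : ∀ j, (K * Lj j) ^ a j = K ^ a j * Lj j ^ a j := fun j =>
            Real.mul_rpow (by linarith) (hLjpos j).le
          simp_rw [this, Finset.prod_mul_distrib, ← Real.rpow_sum_of_pos
            (by linarith : (0:ℝ) < K), hsum, Real.rpow_one]
        calc L = ∏ j, L ^ a j := e1
          _ ≤ ∏ j, (K * Lj j) ^ a j := e2
          _ = K * Q := e3
      -- bound on |g w|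
      have hb := hC₀ w (by simpa [Metric.mem_ball, dist_zero_right] using hwball)
      have hgw : ‖g w‖ ≤ C₀ * L * (1 - ‖w‖)⁻¹ := by
        have heq : ‖g w‖
            = ‖g w‖ * (1 - ‖w‖) * L⁻¹ * (L * (1 - ‖w‖)⁻¹) := by
          field_simp
        rw [heq]
        calc ‖g w‖ * (1 - ‖w‖) * L⁻¹ * (L * (1 - ‖w‖)⁻¹)
            ≤ C₀ * (L * (1 - ‖w‖)⁻¹) :=
              mul_le_mul_of_nonneg_right hb (by positivity)
          _ = C₀ * L * (1 - ‖w‖)⁻¹ := by ring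
      have hC₀0 : 0 ≤ C₀ := by
        have h0 : 0 ≤ ‖g w‖ * (1 - ‖w‖) * L⁻¹ := by positivity
        linarith
      -- combine
      have hprod : ∏ j : Fin m, (1 - ‖z j‖) ^ (1 / r j) *
          (Real.log (2 / (1 - ‖z j‖))) ^ (-(1 / r j)) = (∏ j, sj j ^ a j) * Q⁻¹ := by
        rw [hQ, ← Finset.prod_inv_distrib, ← Finset.prod_mul_distrib]
        refine Finset.prod_congr rfl fun j _ => ?_
        rw [Real.rpow_neg (hLjpos j).le]
      rw [hprod]
      have step1 : ‖g w‖ * ((∏ j, sj j ^ a j) * Q⁻¹) ≤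
          (C₀ * L * (1 - ‖w‖)⁻¹) * ((m * (1 - ‖w‖)) * Q⁻¹) := by
        have hQinv : (0:ℝ) ≤ Q⁻¹ := inv_nonneg.mpr hQpos.le
        have hPnn : (0:ℝ) ≤ ∏ j, sj j ^ a j :=
          Finset.prod_nonneg fun j _ => Real.rpow_nonneg (hsjpos j).le _
        exact mul_le_mul hgw (mul_le_mul_of_nonneg_right h1 hQinv)
          (mul_nonneg hPnn hQinv)
          (mul_nonneg (mul_nonneg hC₀0 hLpos.le) (inv_nonneg.mpr hs.le))
      have step2 : (C₀ * L * (1 - ‖w‖)⁻¹) * ((m * (1 - ‖w‖)) * Q⁻¹) =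
          C₀ * m * (L * Q⁻¹) * ((1 - ‖w‖)⁻¹ * (1 - ‖w‖)) := by ring
      have hLQ : L * Q⁻¹ ≤ K := by
        rw [← div_eq_mul_inv, div_le_iff₀ hQpos]
        linarith [h3]
      have step3 : C₀ * m * (L * Q⁻¹) ≤ C₀ * m * K :=
        mul_le_mul_of_nonneg_left hLQ (by positivity)
      calc ‖g w‖ * ((∏ j, sj j ^ a j) * Q⁻¹)
          ≤ C₀ * m * (L * Q⁻¹) * ((1 - ‖w‖)⁻¹ * (1 - ‖w‖)) := step1.trans_eq step2
        _ = C₀ * m * (L * Q⁻¹) := by rw [inv_mul_cancel₀ hs.ne', mul_one]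
        _ ≤ C₀ * m * K := step3
    · -- diagonal
      intro z hz
      congr 1
      rw [hA]
      simp only [Finset.sum_const, card_univ, Fintype.card_fin]
      rw [← Nat.cast_smul_eq_nsmul ℂ, smul_smul, inv_mul_cancel₀ hmC, one_smul]
end
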